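/- (Irreducible components of a transitive state space are all isomorphic.) Let S be a nonempty compact convex subset of a finite-dimensional real vector space V that spans V, equipped with a linear functional u : V → ℝ with u(s) = 1 for all s ∈ S, and suppose S is transitive: for any two extreme points x, y of S there is a linear automorphism T of V with T(S) = S and T(x) = y. Suppose S = convexHull(A₁ ∪ … ∪ A_n), where the A_i are nonempty compact convex indecomposable subsets of V whose linear spans form a linearly independent family. Then for every i and j there is a linear equivalence between the span of A_i and the span of A_j mapping A_i bijectively onto A_j. -/

import Mathlib

noncomputable section

/-- A state space is decomposable (has a classical degree of freedom) if it is the convex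
hull of the union of two nonempty compact convex sets whose linear spans intersect only
in `0`. -/
def Decomposable {V : Type*} [NormedAddCommGroup V] [NormedSpace ℝ V] (S : Set V) : Prop :=
  ∃ S₁ S₂ : Set V, S₁.Nonempty ∧ IsCompact S₁ ∧ Convex ℝ S₁ ∧
    S₂.Nonempty ∧ IsCompact S₂ ∧ Convex ℝ S₂ ∧
    Submodule.span ℝ S₁ ⊓ Submodule.span ℝ S₂ = ⊥ ∧
    S = convexHull ℝ (S₁ ∪ S₂)

namespace TransIrred

open Submodule Set

section Plain

variable {V : Type*} [AddCommGroup V] [Module ℝ V]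
variable {n : ℕ} {S : Set V} {u : V →ₗ[ℝ] ℝ} {A : Fin n → Set V} {P : Fin n → V →ₗ[ℝ] V}

lemma rep_of_mem_convexHull {n : ℕ} {A : Fin n → Set V}
    (hne : ∀ i, (A i).Nonempty) (hconv : ∀ i, Convex ℝ (A i)) {s : V}
    (hs : s ∈ convexHull ℝ (⋃ i, A i)) :
    ∃ t : Fin n → ℝ, ∃ a : Fin n → V, (∀ k, 0 ≤ t k) ∧ (∑ k, t k) = 1 ∧
      (∀ k, a k ∈ A k) ∧ s = ∑ k, t k • a k := by
  classical
  set R : Set V := {x | ∃ t : Fin n → ℝ, ∃ a : Fin n → V, (∀ k, 0 ≤ t k) ∧ (∑ k, t k) = 1 ∧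
      (∀ k, a k ∈ A k) ∧ x = ∑ k, t k • a k} with hR
  suffices h : convexHull ℝ (⋃ i, A i) ⊆ R from h hs
  apply convexHull_min
  · rintro x hx
    obtain ⟨i, hi⟩ : ∃ i, x ∈ A i := by simpa using hx
    refine ⟨fun k => if k = i then 1 else 0, fun k => if h : k = i then x else (hne k).choose,
      ?_, ?_, ?_, ?_⟩
    · intro k; dsimp only; split <;> norm_num
    · simp
    · intro k
      by_cases h : k = i
      · subst h; simpa using hi
      · simpa [h] using (hne k).choose_spec
    · rw [Finset.sum_eq_single i]
      · simp
      · intro k _ hk; simp [hk]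
      · simp
  · rintro x hx y hy θ μ hθ hμ hθμ
    obtain ⟨t, a, ht0, ht1, ha, rfl⟩ := hx
    obtain ⟨t', a', ht0', ht1', ha', rfl⟩ := hy
    refine ⟨fun k => θ * t k + μ * t' k,
      fun k => if h : θ * t k + μ * t' k = 0 then (hne k).choose
        else (θ * t k + μ * t' k)⁻¹ • ((θ * t k) • a k + (μ * t' k) • a' k), ?_, ?_, ?_, ?_⟩
    · intro k; exact add_nonneg (mul_nonneg hθ (ht0 k)) (mul_nonneg hμ (ht0' k))
    · rw [Finset.sum_add_distrib, ← Finset.mul_sum, ← Finset.mul_sum, ht1, ht1']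
      simpa using hθμ
    · intro k
      by_cases h : θ * t k + μ * t' k = 0
      · simpa [h] using (hne k).choose_spec
      · simp only [h, dif_neg, not_false_iff]
        have h1 : 0 ≤ θ * t k := mul_nonneg hθ (ht0 k)
        have h2 : 0 ≤ μ * t' k := mul_nonneg hμ (ht0' k)
        have hpos : 0 < θ * t k + μ * t' k := lt_of_le_of_ne (add_nonneg h1 h2) (Ne.symm h)
        have := hconv k (ha k) (ha' k)
          (div_nonneg h1 hpos.le) (div_nonneg h2 hpos.le)
          (by rw [← add_div, div_self hpos.ne'])
        convert this using 1
        rw [smul_add, smul_smul, smul_smul]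
        rw [div_eq_inv_mul, div_eq_inv_mul]
    · rw [Finset.smul_sum, Finset.smul_sum, ← Finset.sum_add_distrib]
      apply Finset.sum_congr rfl
      intro k _
      by_cases h : θ * t k + μ * t' k = 0
      · have ha1 : 0 ≤ θ * t k := mul_nonneg hθ (ht0 k)
        have ha2 : 0 ≤ μ * t' k := mul_nonneg hμ (ht0' k)
        have h1 : θ * t k = 0 := by linarith
        have h2 : μ * t' k = 0 := by linarith
        simp [h, h1, h2, smul_smul]
      · simp only [h, dif_neg, not_false_iff]
        rw [smul_inv_smul₀ h, smul_smul, smul_smul]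

lemma comp_subS (hS : S = convexHull ℝ (⋃ i, A i)) (k : Fin n) : A k ⊆ S := by
  rw [hS]
  exact (Set.subset_iUnion A k).trans (subset_convexHull ℝ _)

lemma comp_eq (hne : ∀ i, (A i).Nonempty) (hconv : ∀ i, Convex ℝ (A i))
    (hS : S = convexHull ℝ (⋃ i, A i))
    (hPself : ∀ k (v : V), v ∈ span ℝ (A k) → P k v = v)
    (hPzero : ∀ k l (v : V), v ∈ span ℝ (A l) → k ≠ l → P k v = 0)
    {s : V} (hs : s ∈ S) :
    ∃ t : Fin n → ℝ, ∃ a : Fin n → V, (∀ l, 0 ≤ t l) ∧ (∑ l, t l) = 1 ∧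
      (∀ l, a l ∈ A l) ∧ s = ∑ l, t l • a l ∧ ∀ k, P k s = t k • a k := by
  obtain ⟨t, a, ht0, ht1, ha, hrep⟩ := rep_of_mem_convexHull hne hconv (hS ▸ hs)
  refine ⟨t, a, ht0, ht1, ha, hrep, fun k => ?_⟩
  rw [hrep, map_sum]
  rw [Finset.sum_eq_single k]
  · rw [map_smul, hPself k (a k) (subset_span (ha k))]
  · intro l _ hl
    rw [map_smul, hPzero k l (a l) (subset_span (ha l)) (Ne.symm hl), smul_zero]
  · simp

/-- Either the `k`-component of `s ∈ S` is zero, or normalizing it gives a point of `A k`. -/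
lemma comp_decomp (hu : ∀ s ∈ S, u s = 1)
    (hne : ∀ i, (A i).Nonempty) (hconv : ∀ i, Convex ℝ (A i))
    (hS : S = convexHull ℝ (⋃ i, A i))
    (hPself : ∀ k (v : V), v ∈ span ℝ (A k) → P k v = v)
    (hPzero : ∀ k l (v : V), v ∈ span ℝ (A l) → k ≠ l → P k v = 0)
    {s : V} (hs : s ∈ S) (k : Fin n) :
    P k s = 0 ∨ (0 < u (P k s) ∧ (u (P k s))⁻¹ • P k s ∈ A k) := by
  obtain ⟨t, a, ht0, ht1, ha, hrep, hP⟩ := comp_eq hne hconv hS hPself hPzero hs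
  rcases eq_or_lt_of_le (ht0 k) with h0 | hpos
  · left; rw [hP k, ← h0, zero_smul]
  · right
    have hu' : u (P k s) = t k := by
      rw [hP k, map_smul, smul_eq_mul, hu (a k) (comp_subS hS k (ha k)), mul_one]
    rw [hu']
    refine ⟨hpos, ?_⟩
    rw [hP k, inv_smul_smul₀ hpos.ne']
    exact ha k

lemma comp_nonneg (hu : ∀ s ∈ S, u s = 1)
    (hne : ∀ i, (A i).Nonempty) (hconv : ∀ i, Convex ℝ (A i))
    (hS : S = convexHull ℝ (⋃ i, A i))
    (hPself : ∀ k (v : V), v ∈ span ℝ (A k) → P k v = v)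
    (hPzero : ∀ k l (v : V), v ∈ span ℝ (A l) → k ≠ l → P k v = 0)
    {s : V} (hs : s ∈ S) (k : Fin n) : 0 ≤ u (P k s) := by
  rcases comp_decomp hu hne hconv hS hPself hPzero hs k with h | h
  · simp [h]
  · exact h.1.le

lemma comp_of_u_zero (hu : ∀ s ∈ S, u s = 1)
    (hne : ∀ i, (A i).Nonempty) (hconv : ∀ i, Convex ℝ (A i))
    (hS : S = convexHull ℝ (⋃ i, A i))
    (hPself : ∀ k (v : V), v ∈ span ℝ (A k) → P k v = v)
    (hPzero : ∀ k l (v : V), v ∈ span ℝ (A l) → k ≠ l → P k v = 0)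
    {s : V} (hs : s ∈ S) (k : Fin n) (h : u (P k s) = 0) : P k s = 0 := by
  rcases comp_decomp hu hne hconv hS hPself hPzero hs k with h' | h'
  · exact h'
  · exact absurd h h'.1.ne'

/-- A point of `S` lying in the span of a single component lies in that component. -/
lemma comp_slice (hu : ∀ s ∈ S, u s = 1)
    (hne : ∀ i, (A i).Nonempty) (hconv : ∀ i, Convex ℝ (A i))
    (hS : S = convexHull ℝ (⋃ i, A i))
    (hPself : ∀ k (v : V), v ∈ span ℝ (A k) → P k v = v)
    (hPzero : ∀ k l (v : V), v ∈ span ℝ (A l) → k ≠ l → P k v = 0)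
    {s : V} (hs : s ∈ S) (k : Fin n) (hsp : s ∈ span ℝ (A k)) : s ∈ A k := by
  obtain ⟨t, a, ht0, ht1, ha, hrep, hP⟩ := comp_eq hne hconv hS hPself hPzero hs
  have htl : ∀ l, l ≠ k → t l = 0 := by
    intro l hl
    have h1 : P l s = 0 := hPzero l k s hsp hl
    have h2 : (0:ℝ) = t l := by
      have := congrArg u (hP l)
      rw [h1, map_zero, map_smul, smul_eq_mul, hu (a l) (comp_subS hS l (ha l)), mul_one] at this
      exact this
    exact h2.symm
  have htk : t k = 1 := by
    rw [Finset.sum_eq_single k] at ht1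
    · exact ht1
    · intro l _ hl; exact htl l hl
    · simp
  have : s = a k := by
    rw [hrep, Finset.sum_eq_single k]
    · rw [htk, one_smul]
    · intro l _ hl; rw [htl l hl, zero_smul]
    · simp
  rw [this]; exact ha k

/-- An extreme point of a component is an extreme point of `S`. -/
lemma comp_extreme (hu : ∀ s ∈ S, u s = 1)
    (hne : ∀ i, (A i).Nonempty) (hconv : ∀ i, Convex ℝ (A i))
    (hS : S = convexHull ℝ (⋃ i, A i))
    (hPmem : ∀ k (v : V), P k v ∈ span ℝ (A k))
    (hPself : ∀ k (v : V), v ∈ span ℝ (A k) → P k v = v)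
    (hPzero : ∀ k l (v : V), v ∈ span ℝ (A l) → k ≠ l → P k v = 0)
    (hPsum : ∀ v : V, (∑ k, P k v) = v)
    {i : Fin n} {a : V} (ha : a ∈ Set.extremePoints ℝ (A i)) :
    a ∈ Set.extremePoints ℝ S := by
  refine ⟨comp_subS hS i ha.1, ?_⟩
  intro x₁ hx₁ x₂ hx₂ hseg
  have hmem : ∀ x ∈ S, (∀ l, l ≠ i → P l x = 0) → x ∈ A i := by
    intro x hx h0
    have : x ∈ span ℝ (A i) := by
      have := hPsum x
      rw [Finset.sum_eq_single i] at this
      · rw [← this]; exact hPmem i x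
      · intro l _ hl; exact h0 l hl
      · simp
    exact comp_slice hu hne hconv hS hPself hPzero hx i this
  obtain ⟨θ, μ, hθ, hμ, hθμ, hxa⟩ := hseg
  have hx₁i : x₁ ∈ A i := by
    refine hmem x₁ hx₁ fun l hl => ?_
    have h0 : P l a = 0 := hPzero l i a (subset_span ha.1) hl
    have heq : θ * u (P l x₁) + μ * u (P l x₂) = 0 := by
      have := congrArg (fun v => u (P l v)) hxa
      simpa [map_add, map_smul, h0, smul_eq_mul] using this
    have h1 := comp_nonneg hu hne hconv hS hPself hPzero hx₁ l
    have h2 := comp_nonneg hu hne hconv hS hPself hPzero hx₂ l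
    have : u (P l x₁) = 0 := by nlinarith
    exact comp_of_u_zero hu hne hconv hS hPself hPzero hx₁ l this
  have hx₂i : x₂ ∈ A i := by
    refine hmem x₂ hx₂ fun l hl => ?_
    have h0 : P l a = 0 := hPzero l i a (subset_span ha.1) hl
    have heq : θ * u (P l x₁) + μ * u (P l x₂) = 0 := by
      have := congrArg (fun v => u (P l v)) hxa
      simpa [map_add, map_smul, h0, smul_eq_mul] using this
    have h1 := comp_nonneg hu hne hconv hS hPself hPzero hx₁ l
    have h2 := comp_nonneg hu hne hconv hS hPself hPzero hx₂ l
    have : u (P l x₂) = 0 := by nlinarith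
    exact comp_of_u_zero hu hne hconv hS hPself hPzero hx₂ l this
  exact ha.2 hx₁i hx₂i ⟨θ, μ, hθ, hμ, hθμ, hxa⟩


end Plain

section Normed

variable {V : Type*} [NormedAddCommGroup V] [NormedSpace ℝ V] [FiniteDimensional ℝ V]

lemma decomposable_of_image (T : V ≃ₗ[ℝ] V) {X : Set V}
    (h : Decomposable (⇑T '' X)) : Decomposable X := by
  obtain ⟨S₁, S₂, h1n, h1c, h1v, h2n, h2c, h2v, hsp, heq⟩ := h
  have hc : Continuous ⇑T.symm := T.symm.toLinearMap.continuous_of_finiteDimensional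
  have hlin : IsLinearMap ℝ (⇑T.symm) := ⟨map_add _, map_smul _⟩
  have hspanim : ∀ Y : Set V, span ℝ (⇑T.symm '' Y) = (span ℝ Y).map (T.symm : V →ₗ[ℝ] V) := by
    intro Y
    rw [← Submodule.span_image]
    rfl
  refine ⟨⇑T.symm '' S₁, ⇑T.symm '' S₂, h1n.image _, h1c.image hc, h1v.is_linear_image hlin,
    h2n.image _, h2c.image hc, h2v.is_linear_image hlin, ?_, ?_⟩
  · rw [eq_bot_iff]
    intro x hx
    obtain ⟨hx1, hx2⟩ := Submodule.mem_inf.1 hx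
    rw [hspanim] at hx1 hx2
    rw [Submodule.mem_map_equiv] at hx1 hx2
    have : T.symm.symm x ∈ Submodule.span ℝ S₁ ⊓ Submodule.span ℝ S₂ :=
      Submodule.mem_inf.2 ⟨hx1, hx2⟩
    rw [hsp, Submodule.mem_bot] at this
    have hx0 : x = 0 := by
      have := congrArg (⇑T.symm) this
      simpa using this
    simp [hx0]
  · have h0 : X = ⇑T.symm '' (⇑T '' X) := by
      rw [Set.image_image]; simp
    rw [h0, heq, hlin.image_convexHull, Set.image_union]

variable {n : ℕ} {S : Set V} {u : V →ₗ[ℝ] ℝ} {A B : Fin n → Set V} {P Q : Fin n → V →ₗ[ℝ] V}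

/-- Key lemma: an indecomposable member of one decomposition of `S` is contained in a
single component of another decomposition. -/
lemma key_lemma
    (hu : ∀ s ∈ S, u s = 1)
    (hAne : ∀ k, (A k).Nonempty) (hAcv : ∀ k, Convex ℝ (A k))
    (hSA : S = convexHull ℝ (⋃ k, A k))
    (hind : iSupIndep fun k => span ℝ (A k))
    (hPmem : ∀ k (v : V), P k v ∈ span ℝ (A k))
    (hPself : ∀ k (v : V), v ∈ span ℝ (A k) → P k v = v)
    (hPzero : ∀ k l (v : V), v ∈ span ℝ (A l) → k ≠ l → P k v = 0)
    (hPsum : ∀ v : V, (∑ k, P k v) = v)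
    (hBne : ∀ k, (B k).Nonempty) (hBcv : ∀ k, Convex ℝ (B k))
    (hSB : S = convexHull ℝ (⋃ k, B k))
    (hQmem : ∀ k (v : V), Q k v ∈ span ℝ (B k))
    (hQself : ∀ k (v : V), v ∈ span ℝ (B k) → Q k v = v)
    (hQzero : ∀ k l (v : V), v ∈ span ℝ (B l) → k ≠ l → Q k v = 0)
    (hQsum : ∀ v : V, (∑ k, Q k v) = v)
    (i : Fin n) (hBico : IsCompact (B i)) (hBi : ¬ Decomposable (B i)) :
    ∃ k, B i ⊆ A k := by
  classical
  have hBiS : B i ⊆ S := comp_subS hSB i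
  have husum : ∀ v : V, (∑ k, u (P k v)) = u v := by
    intro v; rw [← map_sum, hPsum]
  -- Step 1: components of points of `B i` stay in the span of `B i`.
  have s1 : ∀ b ∈ B i, ∀ k, P k b ∈ span ℝ (B i) := by
    intro b hb k
    have hQl : ∀ l, l ≠ i → ∀ k', Q l (P k' b) = 0 := by
      intro l hl
      have hg : ∀ k', 0 ≤ u (Q l (P k' b)) := by
        intro k'
        rcases comp_decomp hu hAne hAcv hSA hPself hPzero (hBiS hb) k' with h | ⟨hpos, hc⟩
        · simp [h]
        · have hcS : (u (P k' b))⁻¹ • P k' b ∈ S := comp_subS hSA k' hc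
          have hPk' : P k' b = u (P k' b) • ((u (P k' b))⁻¹ • P k' b) :=
            (smul_inv_smul₀ hpos.ne' _).symm
          rw [hPk', map_smul, map_smul, smul_eq_mul]
          exact mul_nonneg hpos.le
            (comp_nonneg hu hBne hBcv hSB hQself hQzero hcS l)
      have hsum0 : (∑ k', u (Q l (P k' b))) = 0 := by
        have : (∑ k', Q l (P k' b)) = Q l b := by rw [← map_sum, hPsum]
        rw [← map_sum, this, hQzero l i b (subset_span hb) hl, map_zero]
      have hall := (Finset.sum_eq_zero_iff_of_nonneg (fun k' _ => hg k')).1 hsum0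
      intro k'
      rcases comp_decomp hu hAne hAcv hSA hPself hPzero (hBiS hb) k' with h | ⟨hpos, hc⟩
      · rw [h, map_zero]
      · have hcS : (u (P k' b))⁻¹ • P k' b ∈ S := comp_subS hSA k' hc
        have hPk' : P k' b = u (P k' b) • ((u (P k' b))⁻¹ • P k' b) :=
          (smul_inv_smul₀ hpos.ne' _).symm
        have h0 : u (Q l ((u (P k' b))⁻¹ • P k' b)) = 0 := by
          have := hall k' (Finset.mem_univ k')
          rw [hPk', map_smul, map_smul, smul_eq_mul] at this
          rcases mul_eq_zero.1 this with h | h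
          · exact absurd h hpos.ne'
          · exact h
        have := comp_of_u_zero hu hBne hBcv hSB hQself hQzero hcS l h0
        rw [hPk', map_smul, this, smul_zero]
    have : P k b = Q i (P k b) := by
      have h := hQsum (P k b)
      rw [Finset.sum_eq_single i] at h
      · exact h.symm
      · intro l _ hl; exact hQl l hl k
      · simp
    rw [this]; exact hQmem i (P k b)
  -- Step 2: nonzero components of points of `B i` normalize into `A k ∩ B i`.
  have s2 : ∀ b ∈ B i, ∀ k, P k b = 0 ∨
      (0 < u (P k b) ∧ (u (P k b))⁻¹ • P k b ∈ A k ∩ B i) := by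
    intro b hb k
    rcases comp_decomp hu hAne hAcv hSA hPself hPzero (hBiS hb) k with h | ⟨hpos, hc⟩
    · exact Or.inl h
    · refine Or.inr ⟨hpos, hc, ?_⟩
      have hspanBi : (u (P k b))⁻¹ • P k b ∈ span ℝ (B i) :=
        Submodule.smul_mem _ _ (s1 b hb k)
      exact comp_slice hu hBne hBcv hSB hQself hQzero (comp_subS hSA k hc) i hspanBi
  -- Step 3: `B i` is contained in the span of a single `A k`.
  have s3 : ∃ k₀, B i ⊆ (span ℝ (A k₀) : Set V) := by
    by_contra hcon
    push_neg at hcon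
    -- find k₀ with a nonzero component
    obtain ⟨b₀, hb₀⟩ := hBne i
    have hub₀ : (∑ k, u (P k b₀)) = 1 := by rw [husum, hu b₀ (hBiS hb₀)]
    obtain ⟨k₀, -, hk₀⟩ := Finset.exists_ne_zero_of_sum_ne_zero (by rw [hub₀]; norm_num :
      (∑ k, u (P k b₀)) ≠ 0)
    set W : Submodule ℝ V := ⨆ (k) (_ : k ≠ k₀), span ℝ (A k) with hW
    have hWle : ∀ k, k ≠ k₀ → span ℝ (A k) ≤ W := fun k hk =>
      le_iSup₂ (f := fun k (_ : k ≠ k₀) => span ℝ (A k)) k hk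
    have hrest : ∀ b : V, b - P k₀ b = ∑ k ∈ Finset.univ.erase k₀, P k b := by
      intro b
      have h := Finset.add_sum_erase Finset.univ (fun k => P k b) (Finset.mem_univ k₀)
      rw [hPsum b] at h
      exact (eq_sub_of_add_eq' h).symm
    have hWmem : ∀ b : V, b - P k₀ b ∈ W := by
      intro b
      rw [hrest]
      exact Submodule.sum_mem _ fun k hk => hWle k (Finset.ne_of_mem_erase hk) (hPmem k b)
    have hterase : ∀ b ∈ S, (∑ k ∈ Finset.univ.erase k₀, u (P k b)) = 1 - u (P k₀ b) := by
      intro b hbS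
      have h := Finset.add_sum_erase Finset.univ (fun k => u (P k b)) (Finset.mem_univ k₀)
      rw [husum b, hu b hbS] at h
      linarith
    have ht_le1 : ∀ b ∈ S, u (P k₀ b) ≤ 1 := by
      intro b hbS
      have h := hterase b hbS
      have h2 : (0:ℝ) ≤ ∑ k ∈ Finset.univ.erase k₀, u (P k b) :=
        Finset.sum_nonneg fun k _ => comp_nonneg hu hAne hAcv hSA hPself hPzero hbS k
      linarith
    -- if the top component has full weight, the point lies in `span (A k₀)`
    have hfull : ∀ b ∈ B i, u (P k₀ b) = 1 → b ∈ span ℝ (A k₀) := by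
      intro b hb h1
      have h := hterase b (hBiS hb)
      rw [h1, sub_self] at h
      have hz : ∀ k ∈ Finset.univ.erase k₀, u (P k b) = 0 :=
        (Finset.sum_eq_zero_iff_of_nonneg fun k _ =>
          comp_nonneg hu hAne hAcv hSA hPself hPzero (hBiS hb) k).1 h
      have hb0 : b - P k₀ b = 0 := by
        rw [hrest]
        exact Finset.sum_eq_zero fun k hk =>
          comp_of_u_zero hu hAne hAcv hSA hPself hPzero (hBiS hb) k (hz k hk)
      have : b = P k₀ b := by rwa [sub_eq_zero] at hb0
      rw [this]; exact hPmem k₀ b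
    -- key sub-step: the residual part of a point of `B i`, normalized, is in `B i`
    have s4 : ∀ b ∈ B i, u (P k₀ b) < 1 →
        (1 - u (P k₀ b))⁻¹ • (b - P k₀ b) ∈ B i := by
      intro b hb htlt
      set t := u (P k₀ b) with hts
      set F := (Finset.univ.erase k₀).filter (fun k => P k b ≠ 0) with hF
      have hsumF : (∑ k ∈ F, u (P k b)) = 1 - t := by
        rw [← hterase b (hBiS hb)]
        apply Finset.sum_filter_of_ne
        intro k _ hk
        intro h; exact hk (by rw [h, map_zero])
      have hpos : (0:ℝ) < ∑ k ∈ F, u (P k b) := by rw [hsumF]; linarith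
      have hmemz : ∀ k ∈ F, (u (P k b))⁻¹ • P k b ∈ B i := by
        intro k hk
        rcases s2 b hb k with h | h
        · exact absurd h (Finset.mem_filter.1 hk).2
        · exact h.2.2
      have hcm := Finset.centerMass_mem_convexHull F
        (fun k _ => comp_nonneg hu hAne hAcv hSA hPself hPzero (hBiS hb) k) hpos hmemz
      rw [(hBcv i).convexHull_eq] at hcm
      have hcme : F.centerMass (fun k => u (P k b)) (fun k => (u (P k b))⁻¹ • P k b)
          = (1 - t)⁻¹ • (b - P k₀ b) := by
        rw [Finset.centerMass, hsumF]
        congr 1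
        have hsum2 : (∑ k ∈ F, u (P k b) • (u (P k b))⁻¹ • P k b) = ∑ k ∈ F, P k b := by
          apply Finset.sum_congr rfl
          intro k hk
          have hne0 : P k b ≠ 0 := (Finset.mem_filter.1 hk).2
          have hu0 : u (P k b) ≠ 0 := by
            intro h
            exact hne0 (comp_of_u_zero hu hAne hAcv hSA hPself hPzero (hBiS hb) k h)
          rw [smul_inv_smul₀ hu0]
        rw [hsum2, hrest]
        apply Finset.sum_filter_of_ne
        intro k _ hk h
        exact hk (h ▸ rfl)
      rwa [hcme] at hcm
    -- the two pieces of the decomposition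
    set S₁ : Set V := B i ∩ (span ℝ (A k₀) : Set V) with hS₁
    set S₂ : Set V := B i ∩ (W : Set V) with hS₂
    have hS₁ne : S₁.Nonempty := by
      rcases s2 b₀ hb₀ k₀ with h | ⟨hpos, hc⟩
      · exact absurd (by rw [h, map_zero]) hk₀
      · exact ⟨_, hc.2, subset_span hc.1⟩
    have hS₂ne : S₂.Nonempty := by
      obtain ⟨b₁, hb₁, hb₁sp⟩ := Set.not_subset.1 (hcon k₀)
      have ht1 : u (P k₀ b₁) < 1 := by
        rcases lt_or_eq_of_le (ht_le1 b₁ (hBiS hb₁)) with h | h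
        · exact h
        · exact absurd (hfull b₁ hb₁ h) hb₁sp
      exact ⟨_, s4 b₁ hb₁ ht1, Submodule.smul_mem _ _ (hWmem b₁)⟩
    apply hBi
    refine ⟨S₁, S₂, hS₁ne, hBico.inter_right (span ℝ (A k₀)).closed_of_finiteDimensional,
      (hBcv i).inter (span ℝ (A k₀)).convex,
      hS₂ne, hBico.inter_right W.closed_of_finiteDimensional, (hBcv i).inter W.convex,
      ?_, ?_⟩
    · exact disjoint_iff.1 ((hind k₀).mono (span_le.2 inter_subset_right)
        (span_le.2 inter_subset_right))
    · apply Set.Subset.antisymm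
      · intro b hb
        have ht0 : 0 ≤ u (P k₀ b) := comp_nonneg hu hAne hAcv hSA hPself hPzero (hBiS hb) k₀
        by_cases h1 : u (P k₀ b) = 1
        · exact subset_convexHull ℝ _ (Or.inl ⟨hb, hfull b hb h1⟩)
        have htlt : u (P k₀ b) < 1 := lt_of_le_of_ne (ht_le1 b (hBiS hb)) h1
        by_cases h0 : u (P k₀ b) = 0
        · have hP0 : P k₀ b = 0 :=
            comp_of_u_zero hu hAne hAcv hSA hPself hPzero (hBiS hb) k₀ h0
          have hbS₂ : b ∈ S₂ := ⟨hb, by simpa [hP0] using hWmem b⟩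
          exact subset_convexHull ℝ _ (Or.inr hbS₂)
        have htpos : 0 < u (P k₀ b) := lt_of_le_of_ne ht0 (Ne.symm h0)
        rcases s2 b hb k₀ with h | ⟨-, hc⟩
        · exact absurd (by rw [h, map_zero]) h0
        have hcS₁ : (u (P k₀ b))⁻¹ • P k₀ b ∈ S₁ := ⟨hc.2, subset_span hc.1⟩
        have hdS₂ : (1 - u (P k₀ b))⁻¹ • (b - P k₀ b) ∈ S₂ :=
          ⟨s4 b hb htlt, Submodule.smul_mem _ _ (hWmem b)⟩
        have hbeq : b = u (P k₀ b) • ((u (P k₀ b))⁻¹ • P k₀ b)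
            + (1 - u (P k₀ b)) • ((1 - u (P k₀ b))⁻¹ • (b - P k₀ b)) := by
          rw [smul_inv_smul₀ (by linarith : (1:ℝ) - u (P k₀ b) ≠ 0),
            smul_inv_smul₀ (ne_of_gt htpos)]
          abel
        have hmem := (convex_convexHull ℝ (S₁ ∪ S₂))
          (subset_convexHull ℝ (S₁ ∪ S₂) (Or.inl hcS₁))
          (subset_convexHull ℝ (S₁ ∪ S₂) (Or.inr hdS₂)) ht0
          (show (0:ℝ) ≤ 1 - u (P k₀ b) by linarith)
          (show u (P k₀ b) + (1 - u (P k₀ b)) = 1 by ring)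
        rw [hbeq]
        exact hmem
      · exact convexHull_min (Set.union_subset inter_subset_left inter_subset_left) (hBcv i)
  obtain ⟨k₀, hk₀⟩ := s3
  exact ⟨k₀, fun b hb => comp_slice hu hAne hAcv hSA hPself hPzero (hBiS hb) k₀ (hk₀ hb)⟩


end Normed

end TransIrred

open TransIrred Submodule Set in
/-- Irreducible components of a transitive state space are all isomorphic: there is a
linear equivalence between the spans of any two components mapping one component
bijectively onto the other. -/
theorem transitive_irreducible_components_isomorphic {V : Type*}
    [NormedAddCommGroup V] [NormedSpace ℝ V] [FiniteDimensional ℝ V]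
    (S : Set V) (hS : S.Nonempty) (hSc : IsCompact S) (hSv : Convex ℝ S)
    (hspan : Submodule.span ℝ S = ⊤)
    (u : V →ₗ[ℝ] ℝ) (hu : ∀ s ∈ S, u s = 1)
    (htrans : ∀ x ∈ Set.extremePoints ℝ S, ∀ y ∈ Set.extremePoints ℝ S,
      ∃ T : V ≃ₗ[ℝ] V, ⇑T '' S = S ∧ T x = y)
    (n : ℕ) (A : Fin n → Set V)
    (hA : ∀ i, (A i).Nonempty ∧ IsCompact (A i) ∧ Convex ℝ (A i) ∧ ¬ Decomposable (A i))
    (hind : iSupIndep fun i => Submodule.span ℝ (A i))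
    (hSdecomp : S = convexHull ℝ (⋃ i, A i)) :
    ∀ i j, ∃ e : (Submodule.span ℝ (A i)) ≃ₗ[ℝ] (Submodule.span ℝ (A j)),
      Set.BijOn (fun x : Submodule.span ℝ (A i) => (e x : V))
        {x : Submodule.span ℝ (A i) | (x : V) ∈ A i} (A j) := by
  classical
  intro i j
  have hne : ∀ k, (A k).Nonempty := fun k => (hA k).1
  have hco : ∀ k, IsCompact (A k) := fun k => (hA k).2.1
  have hcv : ∀ k, Convex ℝ (A k) := fun k => (hA k).2.2.1
  have hdec : ∀ k, ¬ Decomposable (A k) := fun k => (hA k).2.2.2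
  set p : Fin n → Submodule ℝ V := fun k => Submodule.span ℝ (A k) with hp
  -- the spans fill the space
  have hTop : (⨆ k, p k) = ⊤ := by
    rw [hp, ← Submodule.span_iUnion]
    apply le_antisymm le_top
    calc (⊤ : Submodule ℝ V) = Submodule.span ℝ S := hspan.symm
    _ ≤ Submodule.span ℝ (⋃ k, A k) := by
        apply Submodule.span_le.2
        rw [hSdecomp]
        exact convexHull_min Submodule.subset_span (Submodule.span ℝ _).convex
  have hInt : DirectSum.IsInternal p :=
    DirectSum.isInternal_submodule_of_iSupIndep_of_iSup_eq_top hind hTop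
  set e0 : (DirectSum (Fin n) fun k => ↥(p k)) ≃ₗ[ℝ] V := LinearEquiv.ofBijective (DirectSum.coeLinearMap p) hInt
    with he0
  set P : Fin n → V →ₗ[ℝ] V := fun k =>
    (p k).subtype ∘ₗ (DirectSum.component ℝ (Fin n) (fun k => p k) k)
      ∘ₗ (e0.symm : V →ₗ[ℝ] DirectSum (Fin n) fun k => ↥(p k)) with hPdef
  have hPapp : ∀ (k : Fin n) (v : V), P k v = ((e0.symm v) k : V) := fun k v => rfl
  have hPmem : ∀ (k : Fin n) (v : V), P k v ∈ p k := fun k v => ((e0.symm v) k).2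
  have hPself : ∀ (k : Fin n) (v : V), v ∈ p k → P k v = v := by
    intro k v hv
    rw [hPapp, hInt.ofBijective_coeLinearMap_of_mem hv]
  have hPzero : ∀ (k l : Fin n) (v : V), v ∈ p l → k ≠ l → P k v = 0 := by
    intro k l v hv hkl
    have h0 : (e0.symm v) k = 0 :=
      hInt.ofBijective_coeLinearMap_of_ne (Ne.symm hkl) ⟨v, hv⟩
    rw [hPapp, h0, Submodule.coe_zero]
  have hPsum : ∀ v : V, (∑ k, P k v) = v := by
    intro v
    have h2 := congrArg (DirectSum.coeLinearMap p) (DirectSum.sum_univ_of (e0.symm v))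
    rw [map_sum] at h2
    simp only [DirectSum.coeLinearMap_of] at h2
    rw [show DirectSum.coeLinearMap p (e0.symm v) = v from e0.apply_symm_apply v] at h2
    simpa [hPapp] using h2
  -- extreme points of the components, lifted to `S`
  obtain ⟨a, ha⟩ := (hco i).extremePoints_nonempty (hne i)
  obtain ⟨b, hb⟩ := (hco j).extremePoints_nonempty (hne j)
  have haS := comp_extreme hu hne hcv hSdecomp hPmem hPself hPzero hPsum ha
  have hbS := comp_extreme hu hne hcv hSdecomp hPmem hPself hPzero hPsum hb
  obtain ⟨T, hTS, hTab⟩ := htrans a haS b hbS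
  -- the transported decomposition
  set B : Fin n → Set V := fun k => ⇑T '' A k with hB
  have hTcont : Continuous ⇑T := T.toLinearMap.continuous_of_finiteDimensional
  have hlinT : IsLinearMap ℝ (⇑T) := ⟨map_add _, map_smul _⟩
  have hBne : ∀ k, (B k).Nonempty := fun k => (hne k).image _
  have hBcv : ∀ k, Convex ℝ (B k) := fun k => (hcv k).is_linear_image hlinT
  have hBco : ∀ k, IsCompact (B k) := fun k => (hco k).image hTcont
  have hspanB : ∀ k, Submodule.span ℝ (B k) = (p k).map (T : V →ₗ[ℝ] V) := by
    intro k
    rw [hB, ← Submodule.span_image]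
    rfl
  have hmemB : ∀ (k : Fin n) (v : V), v ∈ Submodule.span ℝ (B k) ↔ T.symm v ∈ p k := by
    intro k v
    rw [hspanB k]
    exact Submodule.mem_map_equiv (e := T) (x := v) (p k)
  have hSB : S = convexHull ℝ (⋃ k, B k) := by
    conv_lhs => rw [← hTS, hSdecomp]
    rw [hlinT.image_convexHull, Set.image_iUnion]
  set Q : Fin n → V →ₗ[ℝ] V := fun k =>
    (T : V →ₗ[ℝ] V) ∘ₗ P k ∘ₗ (T.symm : V →ₗ[ℝ] V) with hQdef
  have hQapp : ∀ (k : Fin n) (v : V), Q k v = T (P k (T.symm v)) := fun k v => rfl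
  have hQmem : ∀ (k : Fin n) (v : V), Q k v ∈ Submodule.span ℝ (B k) := by
    intro k v
    rw [hmemB, hQapp, T.symm_apply_apply]
    exact hPmem k _
  have hQself : ∀ (k : Fin n) (v : V), v ∈ Submodule.span ℝ (B k) → Q k v = v := by
    intro k v hv
    rw [hmemB] at hv
    rw [hQapp, hPself k _ hv, T.apply_symm_apply]
  have hQzero : ∀ (k l : Fin n) (v : V), v ∈ Submodule.span ℝ (B l) → k ≠ l → Q k v = 0 := by
    intro k l v hv hkl
    rw [hmemB] at hv
    rw [hQapp, hPzero k l _ hv hkl, map_zero]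
  have hQsum : ∀ v : V, (∑ k, Q k v) = v := by
    intro v
    have : (∑ k, Q k v) = T (∑ k, P k (T.symm v)) := by
      rw [map_sum]
      exact Finset.sum_congr rfl fun k _ => hQapp k v
    rw [this, hPsum, T.apply_symm_apply]
  have hindB : iSupIndep fun k => Submodule.span ℝ (B k) := by
    have heq : (fun k => Submodule.span ℝ (B k))
        = (Submodule.orderIsoMapComap T) ∘ p := by
      funext k
      rw [hspanB k]
      rfl
    rw [heq, iSupIndep_map_orderIso_iff]
    exact hind
  -- nonzero points of `S`, and components are span-disjoint
  have hnz : ∀ x ∈ S, x ≠ 0 := by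
    intro x hx h0
    have := hu x hx
    rw [h0, map_zero] at this
    norm_num at this
  have hdj : ∀ (k l : Fin n) (x : V), x ∈ A k → x ∈ A l → x ≠ 0 → k = l := by
    intro k l x hk hl hx0
    by_contra hkl
    have h1 : x ∈ p k := Submodule.subset_span hk
    have h2 : x ∈ (⨆ (m) (_ : m ≠ k), p m) :=
      le_iSup₂ (f := fun (m : Fin n) (_ : m ≠ k) => p m) l (Ne.symm hkl)
        (Submodule.subset_span hl)
    exact hx0 (Submodule.disjoint_def.1 (hind k) x h1 h2)
  -- both directions of the key lemma
  obtain ⟨k₁, hk₁⟩ : ∃ k, B i ⊆ A k :=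
    key_lemma hu hne hcv hSdecomp hind hPmem hPself hPzero hPsum
      hBne hBcv hSB hQmem hQself hQzero hQsum i (hBco i)
      (fun hd => hdec i (decomposable_of_image T hd))
  obtain ⟨k₂, hk₂⟩ : ∃ k, A j ⊆ B k :=
    key_lemma hu hBne hBcv hSB hindB hQmem hQself hQzero hQsum
      hne hcv hSdecomp hPmem hPself hPzero hPsum j (hco j) (hdec j)
  have hbB : T a ∈ B i := ⟨a, ha.1, rfl⟩
  have hbAk₁ : b ∈ A k₁ := hTab ▸ hk₁ hbB
  have hk₁j : k₁ = j := hdj k₁ j b hbAk₁ hb.1 (hnz b (comp_subS hSdecomp j hb.1))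
  obtain ⟨a', ha', hTa'⟩ := hk₂ hb.1
  have ha'a : a' = a := T.injective (by rw [hTa', hTab])
  have hk₂i : k₂ = i := hdj k₂ i a (ha'a ▸ ha') ha.1 (hnz a (comp_subS hSdecomp i ha.1))
  have himg : ⇑T '' A i = A j := by
    apply Set.Subset.antisymm
    · rw [← hk₁j]; exact hk₁
    · rw [hk₂i] at hk₂
      exact hk₂
  have hmap : (p i).map (T : V →ₗ[ℝ] V) = p j := by
    rw [← hspanB i, hB]
    exact congrArg (Submodule.span ℝ) himg
  refine ⟨T.ofSubmodules (p i) (p j) hmap, ?_, ?_, ?_⟩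
  · intro x hx
    show ((T.ofSubmodules (p i) (p j) hmap) x : V) ∈ A j
    rw [T.ofSubmodules_apply hmap x, ← himg]
    exact Set.mem_image_of_mem _ hx
  · intro x _ y _ hxy
    simp only [T.ofSubmodules_apply hmap] at hxy
    exact Subtype.ext (T.injective hxy)
  · intro y hy
    rw [← himg] at hy
    obtain ⟨x, hx, hTx⟩ := hy
    refine ⟨⟨x, Submodule.subset_span hx⟩, hx, ?_⟩
    show ((T.ofSubmodules (p i) (p j) hmap) _ : V) = y
    rw [T.ofSubmodules_apply hmap]
    exact hTx
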